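/- Let A, B, C, D be symmetric 2×2 complex matrices and let Q be the double-symmetric 4×6 matrix [[A,B,C],[B,C,D]]. Then Q has rank at most 1 if and only if there exist a symmetric 2×2 complex matrix S of rank at most 1 and scalars a, b, c, d ∈ ℂ satisfying ac = b², bd = c², ad = bc, such that A = aS, B = bS, C = cS and D = dS. -/

import Mathlib

open Matrix

lemma factor_rank_le_one {m n : ℕ} (M : Matrix (Fin m) (Fin n) ℂ)
    (v : Fin m → ℂ) (w : Fin n → ℂ) (h : ∀ i j, M i j = v i * w j) : M.rank ≤ 1 := by
  have hM : M = Matrix.replicateCol Unit v * Matrix.replicateRow Unit w := by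
    ext i j
    simp [Matrix.mul_apply, Matrix.replicateCol, Matrix.replicateRow, h i j]
  calc M.rank ≤ (Matrix.replicateCol Unit v).rank := by rw [hM]; exact Matrix.rank_mul_le_left _ _
    _ ≤ Fintype.card Unit := Matrix.rank_le_card_width _
    _ = 1 := by simp

lemma rank_le_one_factor {m n : ℕ} (M : Matrix (Fin m) (Fin n) ℂ)
    (h : M.rank ≤ 1) : ∃ (v : Fin m → ℂ) (w : Fin n → ℂ), ∀ i j, M i j = v i * w j := by
  rw [Matrix.rank_eq_finrank_span_cols, Submodule.finrank_le_one_iff_isPrincipal] at h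
  obtain ⟨v, hv⟩ := h
  have hcol : ∀ j, ∃ c : ℂ, c • v = Mᵀ j := by
    intro j
    rw [← Submodule.mem_span_singleton, ← hv]
    exact Submodule.subset_span (Set.mem_range_self j)
  choose c hc using hcol
  refine ⟨v, c, fun i j => ?_⟩
  have := congrFun (hc j) i
  simp only [Pi.smul_apply, smul_eq_mul, Matrix.transpose_apply] at this
  rw [← this]; ring

lemma key0 (u0 u1 u2 u3 w0 w1 w2 w3 w4 w5 : ℂ) (hu0 : u0 ≠ 0)
    (symA : u0 * w1 = u1 * w0) (symB : u0 * w3 = u1 * w2) (symC : u0 * w5 = u1 * w4)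
    (cB00 : u0 * w2 = u2 * w0) (cB01 : u0 * w3 = u2 * w1)
    (cB10 : u1 * w2 = u3 * w0) (cB11 : u1 * w3 = u3 * w1)
    (cC00 : u0 * w4 = u2 * w2) (cC01 : u0 * w5 = u2 * w3)
    (cC10 : u1 * w4 = u3 * w2) (cC11 : u1 * w5 = u3 * w3) :
    ∃ a b c d : ℂ, a * c = b ^ 2 ∧ b * d = c ^ 2 ∧ a * d = b * c ∧
      w0 = a * u0 ∧ w1 = a * u1 ∧ w2 = b * u0 ∧ w3 = b * u1 ∧
      w4 = c * u0 ∧ w5 = c * u1 ∧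
      u2 * w4 = d * (u0 * u0) ∧ u2 * w5 = d * (u0 * u1) ∧
      u3 * w4 = d * (u1 * u0) ∧ u3 * w5 = d * (u1 * u1) := by
  by_cases hw0 : w0 = 0
  · have hw1 : w1 = 0 := by
      have := symA; rw [hw0] at this; simpa [hu0] using this
    have hw2 : w2 = 0 := by
      have := cB00; rw [hw0] at this; simpa [hu0] using this
    have hw3 : w3 = 0 := by
      have := cB01; rw [hw1] at this; simpa [hu0] using this
    have hw4 : w4 = 0 := by
      have := cC00; rw [hw2] at this; simpa [hu0] using this
    have hw5 : w5 = 0 := by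
      have := cC01; rw [hw3] at this; simpa [hu0] using this
    exact ⟨0, 0, 0, 0, by ring, by ring, by ring, by simp [hw0], by simp [hw1],
      by simp [hw2], by simp [hw3], by simp [hw4], by simp [hw5],
      by simp [hw4], by simp [hw5], by simp [hw4], by simp [hw5]⟩
  · refine ⟨w0 / u0, w2 / u0, w4 / u0, w2 * w4 / (u0 * w0),
      ?_, ?_, ?_, ?_, ?_, ?_, ?_, ?_, ?_, ?_, ?_, ?_, ?_⟩
    · field_simp
      apply mul_left_cancel₀ hu0
      linear_combination w0*cC00 - w2*cB00
    · field_simp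
      apply mul_left_cancel₀ hu0
      linear_combination w2*w4*cB00 - w0*w4*cC00
    · field_simp
    · field_simp
    · field_simp
      linear_combination symA
    · field_simp
    · field_simp
      linear_combination symB
    · field_simp
    · field_simp
      linear_combination symC
    · field_simp
      linear_combination -w4*cB00
    · field_simp
      linear_combination -w5*cB00 + w2*symC
    · field_simp
      linear_combination -w4*cB10
    · field_simp
      linear_combination u3*w0*symC - u1*w4*cB10

lemma key (u0 u1 u2 u3 w0 w1 w2 w3 w4 w5 : ℂ) (hu : u0 ≠ 0 ∨ u1 ≠ 0)
    (symA : u0 * w1 = u1 * w0) (symB : u0 * w3 = u1 * w2) (symC : u0 * w5 = u1 * w4)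
    (cB00 : u0 * w2 = u2 * w0) (cB01 : u0 * w3 = u2 * w1)
    (cB10 : u1 * w2 = u3 * w0) (cB11 : u1 * w3 = u3 * w1)
    (cC00 : u0 * w4 = u2 * w2) (cC01 : u0 * w5 = u2 * w3)
    (cC10 : u1 * w4 = u3 * w2) (cC11 : u1 * w5 = u3 * w3) :
    ∃ a b c d : ℂ, a * c = b ^ 2 ∧ b * d = c ^ 2 ∧ a * d = b * c ∧
      w0 = a * u0 ∧ w1 = a * u1 ∧ w2 = b * u0 ∧ w3 = b * u1 ∧
      w4 = c * u0 ∧ w5 = c * u1 ∧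
      u2 * w4 = d * (u0 * u0) ∧ u2 * w5 = d * (u0 * u1) ∧
      u3 * w4 = d * (u1 * u0) ∧ u3 * w5 = d * (u1 * u1) := by
  rcases hu with h | h
  · exact key0 u0 u1 u2 u3 w0 w1 w2 w3 w4 w5 h symA symB symC
      cB00 cB01 cB10 cB11 cC00 cC01 cC10 cC11
  · obtain ⟨a, b, c, d, r1, r2, r3, e1, e0, e3, e2, e5, e4, f1, f2, f3, f4⟩ :=
      key0 u1 u0 u3 u2 w1 w0 w3 w2 w5 w4 h symA.symm symB.symm symC.symm
        cB11 cB10 cB01 cB00 cC11 cC10 cC01 cC00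
    exact ⟨a, b, c, d, r1, r2, r3, e0, e1, e2, e3, e4, e5, f4, f3, f2, f1⟩

/-- The 4×6 double-symmetric matrix built from symmetric 2×2 blocks `A B C D` in the
block form `[[A, B, C], [B, C, D]]`. -/
def doubleSymBlock (A B C D : Matrix (Fin 2) (Fin 2) ℂ) : Matrix (Fin 4) (Fin 6) ℂ :=
  !![A 0 0, A 0 1, B 0 0, B 0 1, C 0 0, C 0 1;
     A 1 0, A 1 1, B 1 0, B 1 1, C 1 0, C 1 1;
     B 0 0, B 0 1, C 0 0, C 0 1, D 0 0, D 0 1;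
     B 1 0, B 1 1, C 1 0, C 1 1, D 1 0, D 1 1]

set_option maxHeartbeats 1000000 in
/-- A double-symmetric 4×6 matrix `[[A,B,C],[B,C,D]]` has rank at most 1 if and only
if there are a symmetric 2×2 matrix `S` of rank at most 1 and scalars `a, b, c, d`
with `ac = b²`, `bd = c²`, `ad = bc` such that `A = aS`, `B = bS`, `C = cS`, `D = dS`. -/
theorem stmt_4 (A B C D : Matrix (Fin 2) (Fin 2) ℂ)
    (hA : A.IsSymm) (hB : B.IsSymm) (hC : C.IsSymm) (hD : D.IsSymm) :
    (doubleSymBlock A B C D).rank ≤ 1 ↔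
      ∃ (S : Matrix (Fin 2) (Fin 2) ℂ) (a b c d : ℂ),
        S.IsSymm ∧ S.rank ≤ 1 ∧
        a * c = b ^ 2 ∧ b * d = c ^ 2 ∧ a * d = b * c ∧
        A = a • S ∧ B = b • S ∧ C = c • S ∧ D = d • S := by
  constructor
  · intro h
    obtain ⟨v, w, hQ⟩ := rank_le_one_factor _ h
    have eA00 : A 0 0 = v 0 * w 0 := by simpa [doubleSymBlock] using hQ 0 0
    have eA01 : A 0 1 = v 0 * w 1 := by simpa [doubleSymBlock] using hQ 0 1
    have eA10 : A 1 0 = v 1 * w 0 := by simpa [doubleSymBlock] using hQ 1 0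
    have eA11 : A 1 1 = v 1 * w 1 := by simpa [doubleSymBlock] using hQ 1 1
    have eB00 : B 0 0 = v 0 * w 2 := by simpa [doubleSymBlock] using hQ 0 2
    have eB01 : B 0 1 = v 0 * w 3 := by simpa [doubleSymBlock] using hQ 0 3
    have eB10 : B 1 0 = v 1 * w 2 := by simpa [doubleSymBlock] using hQ 1 2
    have eB11 : B 1 1 = v 1 * w 3 := by simpa [doubleSymBlock] using hQ 1 3
    have eC00 : C 0 0 = v 0 * w 4 := by simpa [doubleSymBlock] using hQ 0 4
    have eC01 : C 0 1 = v 0 * w 5 := by simpa [doubleSymBlock] using hQ 0 5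
    have eC10 : C 1 0 = v 1 * w 4 := by simpa [doubleSymBlock] using hQ 1 4
    have eC11 : C 1 1 = v 1 * w 5 := by simpa [doubleSymBlock] using hQ 1 5
    have eB00' : B 0 0 = v 2 * w 0 := by simpa [doubleSymBlock] using hQ 2 0
    have eB01' : B 0 1 = v 2 * w 1 := by simpa [doubleSymBlock] using hQ 2 1
    have eB10' : B 1 0 = v 3 * w 0 := by simpa [doubleSymBlock] using hQ 3 0
    have eB11' : B 1 1 = v 3 * w 1 := by simpa [doubleSymBlock] using hQ 3 1
    have eC00' : C 0 0 = v 2 * w 2 := by simpa [doubleSymBlock] using hQ 2 2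
    have eC01' : C 0 1 = v 2 * w 3 := by simpa [doubleSymBlock] using hQ 2 3
    have eC10' : C 1 0 = v 3 * w 2 := by simpa [doubleSymBlock] using hQ 3 2
    have eC11' : C 1 1 = v 3 * w 3 := by simpa [doubleSymBlock] using hQ 3 3
    have eD00 : D 0 0 = v 2 * w 4 := by simpa [doubleSymBlock] using hQ 2 4
    have eD01 : D 0 1 = v 2 * w 5 := by simpa [doubleSymBlock] using hQ 2 5
    have eD10 : D 1 0 = v 3 * w 4 := by simpa [doubleSymBlock] using hQ 3 4
    have eD11 : D 1 1 = v 3 * w 5 := by simpa [doubleSymBlock] using hQ 3 5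
    by_cases hz : v 0 = 0 ∧ v 1 = 0
    · refine ⟨D, 0, 0, 0, 1, hD, ?_, by ring, by ring, by ring, ?_, ?_, ?_, (one_smul _ _).symm⟩
      · exact factor_rank_le_one D ![v 2, v 3] ![w 4, w 5] (by
          intro i j; fin_cases i <;> fin_cases j <;>
            simp [eD00, eD01, eD10, eD11])
      · ext i j; fin_cases i <;> fin_cases j <;>
          simp [eA00, eA01, eA10, eA11, hz.1, hz.2]
      · ext i j; fin_cases i <;> fin_cases j <;>
          simp [eB00, eB01, eB10, eB11, hz.1, hz.2]
      · ext i j; fin_cases i <;> fin_cases j <;>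
          simp [eC00, eC01, eC10, eC11, hz.1, hz.2]
    · rw [not_and_or] at hz
      have symA : v 0 * w 1 = v 1 * w 0 := by rw [← eA01, ← eA10]; exact (hA.apply 0 1).symm
      have symB : v 0 * w 3 = v 1 * w 2 := by rw [← eB01, ← eB10]; exact (hB.apply 0 1).symm
      have symC : v 0 * w 5 = v 1 * w 4 := by rw [← eC01, ← eC10]; exact (hC.apply 0 1).symm
      have cB00 : v 0 * w 2 = v 2 * w 0 := by rw [← eB00, ← eB00']
      have cB01 : v 0 * w 3 = v 2 * w 1 := by rw [← eB01, ← eB01']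
      have cB10 : v 1 * w 2 = v 3 * w 0 := by rw [← eB10, ← eB10']
      have cB11 : v 1 * w 3 = v 3 * w 1 := by rw [← eB11, ← eB11']
      have cC00 : v 0 * w 4 = v 2 * w 2 := by rw [← eC00, ← eC00']
      have cC01 : v 0 * w 5 = v 2 * w 3 := by rw [← eC01, ← eC01']
      have cC10 : v 1 * w 4 = v 3 * w 2 := by rw [← eC10, ← eC10']
      have cC11 : v 1 * w 5 = v 3 * w 3 := by rw [← eC11, ← eC11']
      obtain ⟨a, b, c, d, r1, r2, r3, g0, g1, g2, g3, g4, g5, f00, f01, f10, f11⟩ :=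
        key (v 0) (v 1) (v 2) (v 3) (w 0) (w 1) (w 2) (w 3) (w 4) (w 5) hz
          symA symB symC cB00 cB01 cB10 cB11 cC00 cC01 cC10 cC11
      refine ⟨!![v 0 * v 0, v 0 * v 1; v 1 * v 0, v 1 * v 1], a, b, c, d, ?_, ?_,
        r1, r2, r3, ?_, ?_, ?_, ?_⟩
      · unfold Matrix.IsSymm
        ext i j; fin_cases i <;> fin_cases j <;> simp [mul_comm]
      · exact factor_rank_le_one _ ![v 0, v 1] ![v 0, v 1] (by
          intro i j; fin_cases i <;> fin_cases j <;> simp)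
      · ext i j; fin_cases i <;> fin_cases j <;>
          simp [eA00, eA01, eA10, eA11, g0, g1] <;> ring
      · ext i j; fin_cases i <;> fin_cases j <;>
          simp [eB00, eB01, eB10, eB11, g2, g3] <;> ring
      · ext i j; fin_cases i <;> fin_cases j <;>
          simp [eC00, eC01, eC10, eC11, g4, g5] <;> ring
      · ext i j; fin_cases i <;> fin_cases j <;>
          simp [eD00, eD01, eD10, eD11, f00, f01, f10, f11] <;> ring
  · rintro ⟨S, a, b, c, d, hSs, hSr, hac, hbd, had, rfl, rfl, rfl, rfl⟩
    obtain ⟨x, y, hS⟩ := rank_le_one_factor S hSr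
    by_cases ha : a = 0
    · have hb : b = 0 := by
        have : b ^ 2 = 0 := by rw [← hac, ha]; ring
        exact pow_eq_zero_iff (n := 2) (by norm_num) |>.mp this
      have hc : c = 0 := by
        have : c ^ 2 = 0 := by rw [← hbd, hb]; ring
        exact pow_eq_zero_iff (n := 2) (by norm_num) |>.mp this
      exact factor_rank_le_one _ ![0, 0, x 0, x 1] ![0, 0, 0, 0, d * y 0, d * y 1] (by
        intro i j; fin_cases i <;> fin_cases j <;>
          simp [doubleSymBlock, hS, ha, hb, hc, Matrix.cons_val_succ,
            Matrix.vecHead, Matrix.vecTail] <;>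
          (try (rw [show (5 : Fin 6) = ⟨4+1, by norm_num⟩ from rfl, Matrix.cons_val_succ'] <;> norm_num [Matrix.cons_val_succ', Matrix.vecHead, Matrix.vecTail])) <;> (try ring))
    · exact factor_rank_le_one _ ![x 0, x 1, b / a * x 0, b / a * x 1]
        ![a * y 0, a * y 1, b * y 0, b * y 1, c * y 0, c * y 1] (by
        intro i j; fin_cases i <;> fin_cases j <;>
          simp [doubleSymBlock, hS, Matrix.cons_val_succ, Matrix.vecHead, Matrix.vecTail] <;>
          (try (rw [show (5 : Fin 6) = ⟨4+1, by norm_num⟩ from rfl, Matrix.cons_val_succ'] <;> norm_num [Matrix.cons_val_succ', Matrix.vecHead, Matrix.vecTail])) <;>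
          (try field_simp) <;>
          first
            | ring1
            | linear_combination x 0 * y 0 * hac
            | linear_combination x 0 * y 1 * hac
            | linear_combination x 1 * y 0 * hac
            | linear_combination x 1 * y 1 * hac
            | linear_combination x 0 * y 0 * had
            | linear_combination x 0 * y 1 * had
            | linear_combination x 1 * y 0 * had
            | linear_combination x 1 * y 1 * had
            | linear_combination (-(x 0 * y 0)) * hac
            | linear_combination (-(x 0 * y 1)) * hac
            | linear_combination (-(x 1 * y 0)) * hac
            | linear_combination (-(x 1 * y 1)) * hac
            | linear_combination (-(x 0 * y 0)) * had
            | linear_combination (-(x 0 * y 1)) * had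
            | linear_combination (-(x 1 * y 0)) * had
            | linear_combination (-(x 1 * y 1)) * had)
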